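/- If d = 2k (the critically damped case), then for every real t, exp(tA) = e^{−dt/2} · [[1 + dt/2, dt/2], [−dt/2, 1 − dt/2]]. -/

import Mathlib

open NormedSpace

lemma exp_of_sq_zero (x : Matrix (Fin 2) (Fin 2) ℝ) (hx : x * x = 0) :
    exp x = 1 + x := by
  letI : SeminormedRing (Matrix (Fin 2) (Fin 2) ℝ) := Matrix.linftyOpSemiNormedRing
  letI : NormedRing (Matrix (Fin 2) (Fin 2) ℝ) := Matrix.linftyOpNormedRing
  letI : NormedAlgebra ℝ (Matrix (Fin 2) (Fin 2) ℝ) := Matrix.linftyOpNormedAlgebra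
  rw [exp_eq_tsum ℝ]
  dsimp only
  have hpow : ∀ n : ℕ, 2 ≤ n → x ^ n = 0 := by
    intro n hn
    obtain ⟨m, rfl⟩ := Nat.exists_eq_add_of_le hn
    rw [pow_add, pow_two, hx, zero_mul]
  have heq : (fun n : ℕ => (n.factorial : ℝ)⁻¹ • x ^ n) =
      fun n => if n < 2 then (n.factorial : ℝ)⁻¹ • x ^ n else 0 := by
    ext n
    split_ifs with hn
    · rfl
    · rw [hpow n (by omega), smul_zero]
  rw [heq, tsum_eq_sum (s := Finset.range 2)]
  · simp [Finset.sum_range_succ]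
  · intro n hn
    simp only [Finset.mem_range] at hn
    simp [hn]

lemma exp_smul_one' (c : ℝ) :
    exp (c • (1 : Matrix (Fin 2) (Fin 2) ℝ)) = Real.exp c • 1 := by
  letI : SeminormedRing (Matrix (Fin 2) (Fin 2) ℝ) := Matrix.linftyOpSemiNormedRing
  letI : NormedRing (Matrix (Fin 2) (Fin 2) ℝ) := Matrix.linftyOpNormedRing
  letI : NormedAlgebra ℝ (Matrix (Fin 2) (Fin 2) ℝ) := Matrix.linftyOpNormedAlgebra
  have h1 : c • (1 : Matrix (Fin 2) (Fin 2) ℝ) = algebraMap ℝ _ c :=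
    (Algebra.algebraMap_eq_smul_one c).symm
  rw [h1, ← Algebra.algebraMap_eq_smul_one, Real.exp_eq_exp_ℝ]
  exact (algebraMap_exp_comm (𝕂 := ℝ) (𝔸 := Matrix (Fin 2) (Fin 2) ℝ) c).symm

theorem exp_critically_damped (k d : ℝ) (hk : 0 < k) (hd : 0 < d)
    (h : d = 2 * k) :
    ∀ t : ℝ,
      NormedSpace.exp (t • !![0, k; -k, -d]) =
        Real.exp (-d * t / 2) •
          !![1 + d * t / 2, d * t / 2;
             -(d * t / 2), 1 - d * t / 2] := by
  intro t
  subst h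
  have hsplit : t • !![0, k; -k, -(2 * k)] =
      (-(k * t)) • (1 : Matrix (Fin 2) (Fin 2) ℝ) + (k * t) • !![1, 1; -1, -1] := by
    ext i j
    fin_cases i <;> fin_cases j <;>
      simp [Matrix.one_apply, Matrix.smul_apply] <;> ring
  have hN : ((k * t) • !![(1:ℝ), 1; -1, -1]) * ((k * t) • !![1, 1; -1, -1]) = 0 := by
    ext i j
    fin_cases i <;> fin_cases j <;>
      simp [Matrix.mul_apply, Fin.sum_univ_two, Matrix.smul_apply] <;> ring
  have hcomm : Commute ((-(k * t)) • (1 : Matrix (Fin 2) (Fin 2) ℝ))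
      ((k * t) • !![1, 1; -1, -1]) := by
    unfold Commute SemiconjBy
    simp [smul_mul_assoc, mul_smul_comm]
  rw [hsplit, Matrix.exp_add_of_commute _ _ hcomm, exp_smul_one',
    exp_of_sq_zero _ hN]
  have he : Real.exp (-(2 * k) * t / 2) = Real.exp (-(k * t)) := by ring_nf
  rw [he]
  ext i j
  fin_cases i <;> fin_cases j <;>
    simp [Matrix.mul_apply, Fin.sum_univ_two, Matrix.smul_apply, Matrix.one_apply] <;> ring
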